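/- Let Y be a free ℤ-module of finite rank, α ∈ Y, and α^∨ : Y → ℤ a ℤ-linear map with α^∨(α) = 2. Let B : Y × Y → ℤ be a symmetric ℤ-bilinear form invariant under the reflection s_α : Y → Y defined by s_α(y) = y - α^∨(y)·α, and let Q ∈ ℤ satisfy B(α,α) = 2Q. Let n be a positive integer, set n_α = n / gcd(n, Q), and let Λ = { x ∈ Y : n divides B(x,y) for all y ∈ Y }. Then for every λ ∈ Λ, the integer n_α divides α^∨(λ). -/

import Mathlib

/-- If `B` is a symmetric bilinear form invariant under the reflection
`s_α : y ↦ y - α^∨(y) • α`, `B(α,α) = 2Q`, and `Λ = {x : n ∣ B(x,y) for all y}`,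
then `n_α = n / gcd(n,Q)` divides `α^∨(λ)` for every `λ ∈ Λ`. -/
theorem coroot_value_divisible_on_lattice
    (Y : Type*) [AddCommGroup Y] [Module ℤ Y] [Module.Free ℤ Y] [Module.Finite ℤ Y]
    (B : Y →ₗ[ℤ] Y →ₗ[ℤ] ℤ) (hsymm : ∀ y y' : Y, B y y' = B y' y)
    (α : Y) (αvee : Y →ₗ[ℤ] ℤ) (hαvee : αvee α = 2)
    (hinv : ∀ y y' : Y, B (y - αvee y • α) (y' - αvee y' • α) = B y y')
    (Q : ℤ) (hQ : B α α = 2 * Q)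
    (n : ℕ) (hn : 0 < n)
    (nα : ℕ) (hnα : nα = n / Int.gcd (n : ℤ) Q) :
    ∀ lam : Y, (∀ y : Y, (n : ℤ) ∣ B lam y) → (nα : ℤ) ∣ αvee lam := by
  intro lam hlam
  set c : ℤ := αvee lam with hc
  -- Key: B lam α = Q * c
  have key : B lam α = Q * c := by
    have h := hinv lam α
    rw [hαvee] at h
    simp only [map_sub, map_smul, LinearMap.sub_apply, LinearMap.smul_apply,
      smul_eq_mul, LinearMap.map_smul_of_tower] at h
    rw [hQ] at h
    linarith [h]
  have hdvd : (n : ℤ) ∣ Q * c := key ▸ hlam α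
  set g : ℕ := Int.gcd (n : ℤ) Q with hg
  have hg0 : (g : ℤ) ≠ 0 := by
    have : 0 < g := Int.gcd_pos_of_ne_zero_left Q (by exact_mod_cast hn.ne')
    exact_mod_cast this.ne'
  have hgn : (g : ℤ) ∣ (n : ℤ) := Int.gcd_dvd_left _ _
  have hgQ : (g : ℤ) ∣ Q := Int.gcd_dvd_right _ _
  have hnfac : (n : ℤ) = g * nα := by
    have : (nα : ℤ) = (n : ℤ) / g := by
      rw [hnα]; exact (Int.natCast_div n g).symm
    rw [this, Int.mul_ediv_cancel' hgn]
  have hQfac : Q = g * (Q / g) := (Int.mul_ediv_cancel' hgQ).symm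
  have hdvd2 : (nα : ℤ) ∣ (Q / g) * c := by
    rw [hnfac, hQfac] at hdvd
    rw [mul_assoc] at hdvd
    exact (mul_dvd_mul_iff_left hg0).mp hdvd
  have hcop : IsCoprime (nα : ℤ) (Q / g) := by
    rw [Int.isCoprime_iff_gcd_eq_one]
    have := Int.gcd_div_gcd_div_gcd (i := (n : ℤ)) (j := Q)
      (Int.gcd_pos_of_ne_zero_left Q (by exact_mod_cast hn.ne'))
    rw [← hg] at this
    have hnα' : (nα : ℤ) = (n : ℤ) / g := by
      rw [hnα]; exact (Int.natCast_div n g).symm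
    rw [hnα']; exact this
  exact hcop.dvd_of_dvd_mul_left hdvd2
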